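/- Let ρ be a C¹ N-function which is C² on (0,∞) and elliptic, i.e. ρ'(t) ∼ t·ρ''(t) uniformly in t > 0. Define the shifted N-function ρ_a(t) := ∫₀ᵗ (ρ'(a+τ)/(a+τ))·τ dτ for a ≥ 0. Then uniformly in a, t ≥ 0: ρ_a(t) is comparable to ρ''(a)·t² when t ≲ a, and comparable to ρ(t) when t ≳ a. -/

import Mathlib

open Set Filter

/-- An N-function: strictly increasing and convex on `[0,∞)`, vanishing at `0`,
with `ρ(t)/t → 0` as `t → 0⁺` and `t/ρ(t) → 0` as `t → ∞`. -/
def IsNFunction (ρ : ℝ → ℝ) : Prop :=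
  ρ 0 = 0 ∧ StrictMonoOn ρ (Ici 0) ∧ ConvexOn ℝ (Ici 0) ρ ∧
    Tendsto (fun t => ρ t / t) (nhdsWithin 0 (Ioi 0)) (nhds 0) ∧
    Tendsto (fun t => t / ρ t) atTop (nhds 0)

/-- The conjugate (Young/Legendre) function `ρ*(t) = sup_{s ≥ 0} (s t − ρ s)`. -/
noncomputable def conjN (ρ : ℝ → ℝ) (t : ℝ) : ℝ :=
  sSup {y | ∃ s ≥ 0, y = s * t - ρ s}

/-- The shifted N-function `ρ_a(t) = ∫₀ᵗ ρ'(a+τ)/(a+τ) · τ dτ`. -/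
noncomputable def shiftN (ρ : ℝ → ℝ) (a : ℝ) (t : ℝ) : ℝ :=
  ∫ τ in (0:ℝ)..t, deriv ρ (a + τ) / (a + τ) * τ

/-- An elliptic N-function with characteristics `c₁, c₂`: `C¹` on `[0,∞)`,
`C²` on `(0,∞)`, and `ρ'(t) ∼ t ρ''(t)` uniformly in `t > 0`. -/
def IsElliptic (ρ : ℝ → ℝ) (c₁ c₂ : ℝ) : Prop :=
  ContDiffOn ℝ 1 ρ (Ici 0) ∧ ContDiffOn ℝ 2 ρ (Ioi 0) ∧
    ∀ t > 0, c₁ * deriv ρ t ≤ t * deriv (deriv ρ) t ∧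
      t * deriv (deriv ρ) t ≤ c₂ * deriv ρ t

section Aux

open MeasureTheory intervalIntegral

variable {ρ : ℝ → ℝ} {c₁ c₂ : ℝ}

lemma aux_hasDerivAt (hE : IsElliptic ρ c₁ c₂) {x : ℝ} (hx : 0 < x) :
    HasDerivAt ρ (deriv ρ x) x := by
  have h1 : DifferentiableOn ℝ ρ (Ici 0) := hE.1.differentiableOn one_ne_zero
  exact (h1.differentiableAt (Ici_mem_nhds hx)).hasDerivAt

lemma aux_deriv_contDiffOn (hE : IsElliptic ρ c₁ c₂) :
    ContDiffOn ℝ 1 (deriv ρ) (Ioi 0) :=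
  hE.2.1.deriv_of_isOpen isOpen_Ioi (by norm_num)

lemma aux_hasDerivAt2 (hE : IsElliptic ρ c₁ c₂) {x : ℝ} (hx : 0 < x) :
    HasDerivAt (deriv ρ) (deriv (deriv ρ) x) x := by
  have h2 := aux_deriv_contDiffOn hE
  exact ((h2.differentiableOn one_ne_zero).differentiableAt (isOpen_Ioi.mem_nhds hx)).hasDerivAt

lemma aux_f_nonneg (hN : IsNFunction ρ) (hE : IsElliptic ρ c₁ c₂) {x : ℝ} (hx : 0 < x) :
    0 ≤ deriv ρ x := by
  have hd := aux_hasDerivAt hE hx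
  have hs : Tendsto (slope ρ x) (nhdsWithin x (Ioi x)) (nhds (deriv ρ x)) :=
    (hasDerivAt_iff_tendsto_slope.mp hd).mono_left
      (nhdsWithin_mono _ (fun y hy => mem_compl_singleton_iff.mpr (ne_of_gt hy)))
  refine ge_of_tendsto hs ?_
  filter_upwards [self_mem_nhdsWithin] with y hy
  have hxy : x < y := hy
  have h1 : ρ x ≤ ρ y := (hN.2.1 (le_of_lt hx) (le_of_lt (hx.trans hxy)) hxy).le
  rw [slope_def_field]
  apply div_nonneg (by linarith) (by linarith)

lemma aux_f'_nonneg (hc₁ : 0 < c₁) (hN : IsNFunction ρ) (hE : IsElliptic ρ c₁ c₂) {x : ℝ}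
    (hx : 0 < x) : 0 ≤ deriv (deriv ρ) x := by
  have h1 := (hE.2.2 x hx).1
  have h2 : 0 ≤ c₁ * deriv ρ x := mul_nonneg hc₁.le (aux_f_nonneg hN hE hx)
  nlinarith [aux_f_nonneg hN hE hx]

lemma aux_f_mono (hc₁ : 0 < c₁) (hN : IsNFunction ρ) (hE : IsElliptic ρ c₁ c₂) :
    MonotoneOn (deriv ρ) (Ioi 0) := by
  apply monotoneOn_of_deriv_nonneg (convex_Ioi 0)
    ((aux_deriv_contDiffOn hE).continuousOn)
  · rw [interior_Ioi]
    exact (aux_deriv_contDiffOn hE).differentiableOn one_ne_zero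
  · rw [interior_Ioi]
    exact fun x hx => aux_f'_nonneg hc₁ hN hE hx

lemma aux_doubling (hc₁ : 0 < c₁) (hc₂ : 0 < c₂) (hN : IsNFunction ρ)
    (hE : IsElliptic ρ c₁ c₂) {a s : ℝ} (ha : 0 < a) (h1 : a ≤ s) (h2 : s ≤ 4 * a) :
    deriv ρ s ≤ 4 ^ c₂ * deriv ρ a := by
  have hs : 0 < s := lt_of_lt_of_le ha h1
  -- G(x) = f x * x ^ (-c₂) is antitone on (0, ∞)
  have hG : AntitoneOn (fun x : ℝ => deriv ρ x * x ^ (-c₂)) (Ioi 0) := by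
    have hder : ∀ x ∈ Ioi (0:ℝ), HasDerivAt (fun x : ℝ => deriv ρ x * x ^ (-c₂))
        (deriv (deriv ρ) x * x ^ (-c₂) + deriv ρ x * (-c₂ * x ^ (-c₂ - 1))) x := by
      intro x hx
      exact (aux_hasDerivAt2 hE hx).mul
        (Real.hasDerivAt_rpow_const (Or.inl (ne_of_gt hx)))
    apply antitoneOn_of_deriv_nonpos (convex_Ioi 0)
    · exact fun x hx => ((hder x hx).continuousAt.continuousWithinAt)
    · rw [interior_Ioi]
      exact fun x hx => ((hder x hx).differentiableAt).differentiableWithinAt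
    · rw [interior_Ioi]
      intro x hx
      rw [(hder x hx).deriv]
      have hxpos : (0:ℝ) < x := hx
      have e : x * x ^ (-c₂ - 1) = x ^ (-c₂) := by
        rw [Real.rpow_sub hxpos, Real.rpow_one]; field_simp
      rw [← e]
      have hfact : x * deriv (deriv ρ) x - c₂ * deriv ρ x ≤ 0 := by
        have := (hE.2.2 x hxpos).2; linarith
      have hpow : (0:ℝ) ≤ x ^ (-c₂ - 1) := (Real.rpow_pos_of_pos hxpos _).le
      calc deriv (deriv ρ) x * (x * x ^ (-c₂ - 1)) + deriv ρ x * (-c₂ * x ^ (-c₂ - 1))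
          = x ^ (-c₂ - 1) * (x * deriv (deriv ρ) x - c₂ * deriv ρ x) := by ring
        _ ≤ 0 := mul_nonpos_of_nonneg_of_nonpos hpow hfact
  have key : deriv ρ s * s ^ (-c₂) ≤ deriv ρ a * a ^ (-c₂) :=
    hG (mem_Ioi.mpr ha) (mem_Ioi.mpr hs) h1
  have hsp : (0:ℝ) < s ^ c₂ := Real.rpow_pos_of_pos hs _
  have hap : (0:ℝ) < a ^ c₂ := Real.rpow_pos_of_pos ha _
  have hmul := mul_le_mul_of_nonneg_right key hsp.le
  rw [Real.rpow_neg hs.le, Real.rpow_neg ha.le] at hmul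
  have e1 : deriv ρ s * (s ^ c₂)⁻¹ * s ^ c₂ = deriv ρ s := by field_simp
  have e2 : deriv ρ a * (a ^ c₂)⁻¹ * s ^ c₂ = deriv ρ a * (s ^ c₂ / a ^ c₂) := by ring
  rw [e1, e2] at hmul
  have hratio : s ^ c₂ / a ^ c₂ ≤ 4 ^ c₂ := by
    rw [← Real.div_rpow hs.le ha.le]
    exact Real.rpow_le_rpow (by positivity) (by rw [div_le_iff₀ ha]; linarith) hc₂.le
  have hfa : 0 ≤ deriv ρ a := aux_f_nonneg hN hE ha
  calc deriv ρ s ≤ deriv ρ a * (s ^ c₂ / a ^ c₂) := hmul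
    _ ≤ deriv ρ a * 4 ^ c₂ := mul_le_mul_of_nonneg_left hratio hfa
    _ = 4 ^ c₂ * deriv ρ a := by ring

lemma aux_int_f (hc₁ : 0 < c₁) (hN : IsNFunction ρ) (hE : IsElliptic ρ c₁ c₂) {s t : ℝ}
    (hs : 0 ≤ s) (hst : s ≤ t) : IntervalIntegrable (deriv ρ) volume s t := by
  rcases eq_or_lt_of_le hst with rfl | h
  · simp
  have ht : 0 < t := lt_of_le_of_lt hs h
  rw [intervalIntegrable_iff_integrableOn_Ioc_of_le hst]
  apply Measure.integrableOn_of_bounded (M := deriv ρ t) measure_Ioc_lt_top.ne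
  · exact (measurable_deriv ρ).aestronglyMeasurable
  · filter_upwards [ae_restrict_mem measurableSet_Ioc] with x hx
    have hx0 : 0 < x := lt_of_le_of_lt hs hx.1
    rw [Real.norm_eq_abs, abs_of_nonneg (aux_f_nonneg hN hE hx0)]
    exact aux_f_mono hc₁ hN hE (mem_Ioi.mpr hx0) (mem_Ioi.mpr ht) hx.2

lemma aux_ftc (hc₁ : 0 < c₁) (hN : IsNFunction ρ) (hE : IsElliptic ρ c₁ c₂) {s t : ℝ}
    (hs : 0 ≤ s) (hst : s ≤ t) : ∫ x in s..t, deriv ρ x = ρ t - ρ s := by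
  apply integral_eq_sub_of_hasDeriv_right_of_le hst
  · exact hE.1.continuousOn.mono (fun x hx => le_trans hs hx.1)
  · intro x hx
    exact (aux_hasDerivAt hE (lt_of_le_of_lt hs hx.1)).hasDerivWithinAt
  · exact aux_int_f hc₁ hN hE hs hst

lemma aux_rho_nonneg (hN : IsNFunction ρ) {t : ℝ} (ht : 0 ≤ t) : 0 ≤ ρ t := by
  rcases eq_or_lt_of_le ht with rfl | h
  · exact hN.1.ge
  · have h2 := hN.2.1 (le_refl (0:ℝ)) ht h
    rw [hN.1] at h2
    exact h2.le

lemma aux_int_g (hc₁ : 0 < c₁) (hN : IsNFunction ρ) (hE : IsElliptic ρ c₁ c₂) {a s t : ℝ}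
    (ha : 0 ≤ a) (hs : 0 ≤ s) (hst : s ≤ t) :
    IntervalIntegrable (fun τ => deriv ρ (a + τ) / (a + τ) * τ) volume s t := by
  rcases eq_or_lt_of_le hst with rfl | h
  · simp
  have ht : 0 < t := lt_of_le_of_lt hs h
  rw [intervalIntegrable_iff_integrableOn_Ioc_of_le hst]
  apply Measure.integrableOn_of_bounded (M := deriv ρ (a + t)) measure_Ioc_lt_top.ne
  · apply Measurable.aestronglyMeasurable
    exact (((measurable_deriv ρ).comp (measurable_const.add measurable_id)).div
      (measurable_const.add measurable_id)).mul measurable_id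
  · filter_upwards [ae_restrict_mem measurableSet_Ioc] with x hx
    have hx0 : 0 < x := lt_of_le_of_lt hs hx.1
    have hax : 0 < a + x := by linarith
    have hf1 : 0 ≤ deriv ρ (a + x) := aux_f_nonneg hN hE hax
    have hf2 : deriv ρ (a + x) ≤ deriv ρ (a + t) :=
      aux_f_mono hc₁ hN hE (mem_Ioi.mpr hax) (mem_Ioi.mpr (by linarith)) (by linarith [hx.2])
    rw [Real.norm_eq_abs, abs_of_nonneg (by positivity)]
    have h1 : deriv ρ (a + x) / (a + x) * x = deriv ρ (a + x) * (x / (a + x)) := by ring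
    rw [h1]
    have h2 : x / (a + x) ≤ 1 := by rw [div_le_one hax]; linarith
    have h3 : 0 ≤ x / (a + x) := by positivity
    calc deriv ρ (a + x) * (x / (a + x)) ≤ deriv ρ (a + t) * 1 :=
          mul_le_mul hf2 h2 h3 (hf1.trans hf2)
      _ = deriv ρ (a + t) := mul_one _

lemma aux_S_nonneg (hN : IsNFunction ρ) (hE : IsElliptic ρ c₁ c₂) {a t : ℝ}
    (ha : 0 ≤ a) (ht : 0 ≤ t) : 0 ≤ shiftN ρ a t := by
  apply integral_nonneg ht
  intro u hu
  rcases eq_or_lt_of_le hu.1 with rfl | hu0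
  · simp
  have hau : 0 < a + u := by linarith
  have := aux_f_nonneg hN hE hau
  positivity

end Aux

section Main

open MeasureTheory intervalIntegral

set_option maxHeartbeats 1000000 in
/-- Lemma on shifted N-functions. For an elliptic N-function `ρ`,
uniformly in `a, t ≥ 0`: `ρ_a(t) ∼ ρ''(a)·t²` if `t ≤ a` and `ρ_a(t) ∼ ρ(t)` if
`t ≥ a`, with constants depending only on the characteristics of `ρ`. -/
theorem statement4 (ρ : ℝ → ℝ) (c₁ c₂ : ℝ) (hc₁ : 0 < c₁) (hc₂ : 0 < c₂)
    (hN : IsNFunction ρ) (hE : IsElliptic ρ c₁ c₂) :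
    ∃ C > 0, ∀ a ≥ (0:ℝ), ∀ t ≥ (0:ℝ),
      (t ≤ a → deriv (deriv ρ) a * t ^ 2 ≤ C * shiftN ρ a t ∧
        shiftN ρ a t ≤ C * (deriv (deriv ρ) a * t ^ 2)) ∧
      (a ≤ t → ρ t ≤ C * shiftN ρ a t ∧ shiftN ρ a t ≤ C * ρ t) := by
  classical
  have hK1 : (1:ℝ) ≤ 4 ^ c₂ := by
    simpa using Real.rpow_le_rpow_of_exponent_le (by norm_num : (1:ℝ) ≤ 4) hc₂.le
  set K := (4:ℝ) ^ c₂ with hKdef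
  have hK0 : (0:ℝ) < K := lt_of_lt_of_le one_pos hK1
  have hu : (0:ℝ) < 1 / c₁ := by positivity
  have hinv : K * (c₁ * (1 / c₁)) = K := by
    rw [mul_one_div_cancel hc₁.ne', mul_one]
  set C := K * (8 + 4 * c₂ + 1 / c₁) with hCdef
  have hKu : 0 < K * (1 / c₁) := mul_pos hK0 hu
  have hKc₂ : 0 < K * c₂ := mul_pos hK0 hc₂
  have hC0 : 0 < C := by rw [hCdef]; nlinarith
  have hC4 : 4 * c₂ ≤ C := by
    have h1 : 0 ≤ c₂ * (K - 1) := mul_nonneg hc₂.le (by linarith)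
    rw [hCdef]; nlinarith
  have hC8 : 8 * K ≤ C := by rw [hCdef]; nlinarith
  have hC2K : 2 * K ≤ C := by linarith
  have hCK : K ≤ 2 * c₁ * C := by
    have h1 : 0 < K * c₁ := mul_pos hK0 hc₁
    have h2 : 0 < K * c₁ * c₂ := mul_pos h1 hc₂
    rw [hCdef]; nlinarith [hinv]
  refine ⟨C, hC0, ?_⟩
  intro a ha t ht
  have hSint : shiftN ρ a t = ∫ τ in (0:ℝ)..t, deriv ρ (a + τ) / (a + τ) * τ := rfl
  constructor
  · -- Case t ≤ a
    intro hta
    rcases eq_or_lt_of_le ha with rfl | hapos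
    · -- a = 0, hence t = 0
      have ht0 : t = 0 := le_antisymm hta ht
      subst ht0
      simp [shiftN]
    · have hQ0 : 0 ≤ deriv ρ a := aux_f_nonneg hN hE hapos
      have hD0 : 0 ≤ deriv (deriv ρ) a := aux_f'_nonneg hc₁ hN hE hapos
      have hS0 : 0 ≤ shiftN ρ a t := aux_S_nonneg hN hE ha ht
      have ht2 : (0:ℝ) ≤ t ^ 2 := sq_nonneg t
      obtain ⟨hel1, hel2⟩ := hE.2.2 a hapos
      have hIg : IntervalIntegrable (fun τ => deriv ρ (a + τ) / (a + τ) * τ) volume 0 t :=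
        aux_int_g hc₁ hN hE ha le_rfl ht
      have hIlo : IntervalIntegrable (fun τ => deriv ρ a / (2 * a) * τ) volume 0 t :=
        (continuous_const.mul continuous_id).intervalIntegrable 0 t
      have hIhi : IntervalIntegrable (fun τ => K * deriv ρ a / a * τ) volume 0 t :=
        (continuous_const.mul continuous_id).intervalIntegrable 0 t
      -- lower bound for the integral
      have hptlo : ∀ x ∈ Icc (0:ℝ) t, deriv ρ a / (2 * a) * x ≤ deriv ρ (a + x) / (a + x) * x := by
        intro x hx
        have hax : 0 < a + x := by linarith [hx.1]
        have hf1 : deriv ρ a ≤ deriv ρ (a + x) :=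
          aux_f_mono hc₁ hN hE (mem_Ioi.mpr hapos) (mem_Ioi.mpr hax) (by linarith [hx.1])
        have hdd : deriv ρ a / (2 * a) ≤ deriv ρ (a + x) / (a + x) :=
          div_le_div₀ (hQ0.trans hf1) hf1 hax (by linarith [hx.2])
        exact mul_le_mul_of_nonneg_right hdd hx.1
      have hlow : deriv ρ a / (2 * a) * (t ^ 2 / 2) ≤ shiftN ρ a t := by
        have hmono := intervalIntegral.integral_mono_on ht hIlo hIg hptlo
        calc deriv ρ a / (2 * a) * (t ^ 2 / 2)
            = deriv ρ a / (2 * a) * ((t ^ 2 - 0 ^ 2) / 2) := by ring_nf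
          _ = ∫ τ in (0:ℝ)..t, deriv ρ a / (2 * a) * τ := by
              rw [intervalIntegral.integral_const_mul, integral_id]
          _ ≤ shiftN ρ a t := by rw [hSint]; exact hmono
      -- upper bound for the integral
      have hpthi : ∀ x ∈ Icc (0:ℝ) t, deriv ρ (a + x) / (a + x) * x ≤ K * deriv ρ a / a * x := by
        intro x hx
        have hax : 0 < a + x := by linarith [hx.1]
        have hf1 : deriv ρ (a + x) ≤ K * deriv ρ a :=
          aux_doubling hc₁ hc₂ hN hE hapos (by linarith [hx.1]) (by linarith [hx.2, hta])
        have hdd : deriv ρ (a + x) / (a + x) ≤ K * deriv ρ a / a :=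
          div_le_div₀ (mul_nonneg hK0.le hQ0) hf1 hapos (by linarith [hx.1])
        exact mul_le_mul_of_nonneg_right hdd hx.1
      have hup : shiftN ρ a t ≤ K * deriv ρ a / a * (t ^ 2 / 2) := by
        have hmono := intervalIntegral.integral_mono_on ht hIg hIhi hpthi
        calc shiftN ρ a t ≤ ∫ τ in (0:ℝ)..t, K * deriv ρ a / a * τ := by
              rw [hSint]; exact hmono
          _ = K * deriv ρ a / a * ((t ^ 2 - 0 ^ 2) / 2) := by
              rw [intervalIntegral.integral_const_mul, integral_id]
          _ = K * deriv ρ a / a * (t ^ 2 / 2) := by ring_nf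
      have h1' : deriv ρ a * t ^ 2 ≤ 4 * a * shiftN ρ a t := by
        have h := mul_le_mul_of_nonneg_left hlow (by linarith : (0:ℝ) ≤ 4 * a)
        calc deriv ρ a * t ^ 2 = 4 * a * (deriv ρ a / (2 * a) * (t ^ 2 / 2)) := by
              field_simp; ring
          _ ≤ 4 * a * shiftN ρ a t := h
      have h2' : 2 * a * shiftN ρ a t ≤ K * deriv ρ a * t ^ 2 := by
        have h := mul_le_mul_of_nonneg_left hup (by linarith : (0:ℝ) ≤ 2 * a)
        calc 2 * a * shiftN ρ a t ≤ 2 * a * (K * deriv ρ a / a * (t ^ 2 / 2)) := h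
          _ = K * deriv ρ a * t ^ 2 := by field_simp
      constructor
      · have p1 : a * deriv (deriv ρ) a * t ^ 2 ≤ c₂ * deriv ρ a * t ^ 2 :=
          mul_le_mul_of_nonneg_right hel2 ht2
        have p2 : c₂ * (deriv ρ a * t ^ 2) ≤ c₂ * (4 * a * shiftN ρ a t) :=
          mul_le_mul_of_nonneg_left h1' hc₂.le
        have p3 : 4 * c₂ * (a * shiftN ρ a t) ≤ C * (a * shiftN ρ a t) :=
          mul_le_mul_of_nonneg_right hC4 (mul_nonneg ha hS0)
        have key : a * (deriv (deriv ρ) a * t ^ 2) ≤ a * (C * shiftN ρ a t) := by linarith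
        exact le_of_mul_le_mul_left key hapos
      · have q1 : c₁ * (2 * a * shiftN ρ a t) ≤ c₁ * (K * deriv ρ a * t ^ 2) :=
          mul_le_mul_of_nonneg_left h2' hc₁.le
        have q2 : K * t ^ 2 * (c₁ * deriv ρ a) ≤ K * t ^ 2 * (a * deriv (deriv ρ) a) :=
          mul_le_mul_of_nonneg_left hel1 (mul_nonneg hK0.le ht2)
        have q3 : K * (a * deriv (deriv ρ) a * t ^ 2) ≤
            2 * c₁ * C * (a * deriv (deriv ρ) a * t ^ 2) :=
          mul_le_mul_of_nonneg_right hCK (mul_nonneg (mul_nonneg ha hD0) ht2)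
        have key : (2 * c₁ * a) * shiftN ρ a t ≤
            (2 * c₁ * a) * (C * (deriv (deriv ρ) a * t ^ 2)) := by linarith
        exact le_of_mul_le_mul_left key (mul_pos (mul_pos two_pos hc₁) hapos)
  · -- Case a ≤ t
    intro hat
    rcases eq_or_lt_of_le ht with rfl | htpos
    · have ha0 : a = 0 := le_antisymm hat ha
      subst ha0
      simp [shiftN, hN.1]
    · have ht2 : (0:ℝ) < t / 2 := by linarith
      have hS0 : 0 ≤ shiftN ρ a t := aux_S_nonneg hN hE ha ht
      have hρ0 : 0 ≤ ρ t := aux_rho_nonneg hN ht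
      have hf2t : 0 ≤ deriv ρ (t / 2) := aux_f_nonneg hN hE ht2
      -- upper bound: shiftN ≤ t * f(2t)
      have hup2 : shiftN ρ a t ≤ t * deriv ρ (2 * t) := by
        have hIg := aux_int_g hc₁ hN hE ha le_rfl ht
        have hIc : IntervalIntegrable (fun _ => deriv ρ (2 * t)) volume 0 t :=
          intervalIntegrable_const
        have hpt : ∀ x ∈ Icc (0:ℝ) t, deriv ρ (a + x) / (a + x) * x ≤ deriv ρ (2 * t) := by
          intro x hx
          rcases eq_or_lt_of_le hx.1 with rfl | hx0
          · simpa using aux_f_nonneg hN hE (by linarith : (0:ℝ) < 2 * t)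
          · have hax : 0 < a + x := by linarith
            have hle : deriv ρ (a + x) ≤ deriv ρ (2 * t) :=
              aux_f_mono hc₁ hN hE (mem_Ioi.mpr hax) (mem_Ioi.mpr (by linarith))
                (by linarith [hx.2])
            have h2 : x / (a + x) ≤ 1 := by rw [div_le_one hax]; linarith
            have h3 : 0 ≤ x / (a + x) := by positivity
            have h0 : 0 ≤ deriv ρ (a + x) := aux_f_nonneg hN hE hax
            calc deriv ρ (a + x) / (a + x) * x = deriv ρ (a + x) * (x / (a + x)) := by ring
              _ ≤ deriv ρ (2 * t) * 1 := mul_le_mul hle h2 h3 (h0.trans hle)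
              _ = deriv ρ (2 * t) := mul_one _
        have hmono := intervalIntegral.integral_mono_on ht hIg hIc hpt
        calc shiftN ρ a t ≤ ∫ _ in (0:ℝ)..t, deriv ρ (2 * t) := by rw [hSint]; exact hmono
          _ = (t - 0) • deriv ρ (2 * t) := intervalIntegral.integral_const _
          _ = t * deriv ρ (2 * t) := by rw [smul_eq_mul]; ring
      -- ρ t ≤ t * f t
      have hρup : ρ t ≤ t * deriv ρ t := by
        have hIf := aux_int_f hc₁ hN hE le_rfl ht
        have hIc : IntervalIntegrable (fun _ => deriv ρ t) volume 0 t := intervalIntegrable_const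
        have h0 : volume.restrict (Icc (0:ℝ) t) {(0:ℝ)} = 0 := by
          refine le_antisymm ?_ zero_le
          calc volume.restrict (Icc (0:ℝ) t) {(0:ℝ)} ≤ volume {(0:ℝ)} :=
                Measure.le_iff'.1 Measure.restrict_le_self _
            _ = 0 := measure_singleton 0
        have hae : (deriv ρ) ≤ᵐ[volume.restrict (Icc (0:ℝ) t)] (fun _ => deriv ρ t) := by
          filter_upwards [ae_restrict_mem measurableSet_Icc,
            measure_eq_zero_iff_ae_notMem.mp h0] with x hx hx0
          have hxne : x ≠ 0 := fun h => hx0 (by simp [h])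
          have hx0' : 0 < x := lt_of_le_of_ne hx.1 (Ne.symm hxne)
          exact aux_f_mono hc₁ hN hE (mem_Ioi.mpr hx0') (mem_Ioi.mpr htpos) hx.2
        have hmono := intervalIntegral.integral_mono_ae_restrict ht hIf hIc hae
        rw [aux_ftc hc₁ hN hE le_rfl ht, hN.1, sub_zero,
          intervalIntegral.integral_const] at hmono
        calc ρ t ≤ (t - 0) • deriv ρ t := hmono
          _ = t * deriv ρ t := by rw [smul_eq_mul]; ring
      have hd1 : deriv ρ (2 * t) ≤ K * deriv ρ (t / 2) :=
        aux_doubling hc₁ hc₂ hN hE ht2 (by linarith) (by linarith)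
      have hd2 : deriv ρ t ≤ K * deriv ρ (t / 2) :=
        aux_doubling hc₁ hc₂ hN hE ht2 (by linarith) (by linarith)
      -- (t/2) f(t/2) ≤ ρ t
      have hlow2 : t / 2 * deriv ρ (t / 2) ≤ ρ t := by
        have hIf := aux_int_f hc₁ hN hE ht2.le (by linarith : t / 2 ≤ t)
        have hIc : IntervalIntegrable (fun _ => deriv ρ (t / 2)) volume (t / 2) t :=
          intervalIntegrable_const
        have hpt : ∀ x ∈ Icc (t / 2) t, deriv ρ (t / 2) ≤ deriv ρ x := by
          intro x hx
          exact aux_f_mono hc₁ hN hE (mem_Ioi.mpr ht2)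
            (mem_Ioi.mpr (lt_of_lt_of_le ht2 hx.1)) hx.1
        have hmono := intervalIntegral.integral_mono_on (by linarith : t / 2 ≤ t) hIc hIf hpt
        rw [aux_ftc hc₁ hN hE ht2.le (by linarith : t / 2 ≤ t),
          intervalIntegral.integral_const] at hmono
        have hρhalf : 0 ≤ ρ (t / 2) := aux_rho_nonneg hN ht2.le
        have he : (t - t / 2) • deriv ρ (t / 2) = t / 2 * deriv ρ (t / 2) := by
          rw [smul_eq_mul]; ring
        rw [he] at hmono
        linarith
      -- lower bound: (t/2) * (f(t/2)/4) ≤ shiftN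
      have hSlow : t / 2 * (deriv ρ (t / 2) / 4) ≤ shiftN ρ a t := by
        have hI1 := aux_int_g hc₁ hN hE ha le_rfl ht2.le
        have hI2 := aux_int_g hc₁ hN hE ha ht2.le (by linarith : t / 2 ≤ t)
        have hsplit := intervalIntegral.integral_add_adjacent_intervals hI1 hI2
        have hpos1 : 0 ≤ ∫ τ in (0:ℝ)..(t / 2), deriv ρ (a + τ) / (a + τ) * τ := by
          apply intervalIntegral.integral_nonneg ht2.le
          intro u hu
          rcases eq_or_lt_of_le hu.1 with rfl | hu0
          · simp
          · have hau : 0 < a + u := by linarith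
            have := aux_f_nonneg hN hE hau
            positivity
        have hIc : IntervalIntegrable (fun _ => deriv ρ (t / 2) / 4) volume (t / 2) t :=
          intervalIntegrable_const
        have hpt : ∀ x ∈ Icc (t / 2) t, deriv ρ (t / 2) / 4 ≤ deriv ρ (a + x) / (a + x) * x := by
          intro x hx
          have hx0 : 0 < x := lt_of_lt_of_le ht2 hx.1
          have hax : 0 < a + x := by linarith
          have hfge : deriv ρ (t / 2) ≤ deriv ρ (a + x) :=
            aux_f_mono hc₁ hN hE (mem_Ioi.mpr ht2) (mem_Ioi.mpr hax) (by linarith [hx.1])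
          have hr : 1 / 4 ≤ x / (a + x) := by
            rw [le_div_iff₀ hax]
            linarith [hx.1, hx.2]
          calc deriv ρ (t / 2) / 4 = deriv ρ (t / 2) * (1 / 4) := by ring
            _ ≤ deriv ρ (a + x) * (x / (a + x)) :=
                mul_le_mul hfge hr (by norm_num) (hf2t.trans hfge)
            _ = deriv ρ (a + x) / (a + x) * x := by ring
        have hmono := intervalIntegral.integral_mono_on (by linarith : t / 2 ≤ t) hIc hI2 hpt
        rw [intervalIntegral.integral_const] at hmono
        have he : (t - t / 2) • (deriv ρ (t / 2) / 4) = t / 2 * (deriv ρ (t / 2) / 4) := by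
          rw [smul_eq_mul]; ring
        rw [he] at hmono
        have hsum : shiftN ρ a t =
            (∫ τ in (0:ℝ)..(t / 2), deriv ρ (a + τ) / (a + τ) * τ) +
              ∫ τ in (t / 2)..t, deriv ρ (a + τ) / (a + τ) * τ := by
          rw [hSint, hsplit]
        linarith
      constructor
      · have h₁ : t * deriv ρ t ≤ t * (K * deriv ρ (t / 2)) :=
          mul_le_mul_of_nonneg_left hd2 htpos.le
        have h₂ : 8 * K * (t / 2 * (deriv ρ (t / 2) / 4)) ≤ 8 * K * shiftN ρ a t :=
          mul_le_mul_of_nonneg_left hSlow (by nlinarith)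
        have h₃ : 8 * K * shiftN ρ a t ≤ C * shiftN ρ a t :=
          mul_le_mul_of_nonneg_right hC8 hS0
        linarith
      · have h₁ : t * deriv ρ (2 * t) ≤ t * (K * deriv ρ (t / 2)) :=
          mul_le_mul_of_nonneg_left hd1 htpos.le
        have h₂ : 2 * K * (t / 2 * deriv ρ (t / 2)) ≤ 2 * K * ρ t :=
          mul_le_mul_of_nonneg_left hlow2 (by nlinarith)
        have h₃ : 2 * K * ρ t ≤ C * ρ t := mul_le_mul_of_nonneg_right hC2K hρ0
        linarith

end Main
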